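/- For every ε > 0 there exists r₀ such that for every integer r ≥ r₀ there exists n₀ such that for all n ≥ n₀, opt_weak,s,r(S_n) ≥ (1−ε)·n·r·log_r(n)/2. -/

import Mathlib

/-- `GuessForce ok V m` means: in the mistake-bound game with weak (yes/no) reinforcement
where queries have type `Q`, guesses have type `A`, and `ok q g f` says that guess `g` is a
correct answer to query `q` when the hidden target is `f`, an (adaptive) adversary whose
answers must stay consistent with some member of the current version space `V` can force
every deterministic learner to be answered "no" at least `m` times.
At each step the adversary chooses a query `q` and, depending on the learner's guess `g`,
either answers "no" (`c g = true`, one more mistake, continuing from the consistent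
functions for which the guess is wrong) or answers "yes" (`c g = false`, continuing from the
consistent functions for which the guess is correct). -/
inductive GuessForce {α Q A : Type*} (ok : Q → A → α → Prop) : Set α → ℕ → Prop where
  | zero (V : Set α) : V.Nonempty → GuessForce ok V 0
  | step (V : Set α) (m : ℕ) (q : Q) (c : A → Bool)
      (hne : ∀ g : A, (if c g then {f ∈ V | ¬ ok q g f} else {f ∈ V | ok q g f}).Nonempty)
      (h : ∀ g : A, GuessForce ok (if c g then {f ∈ V | ¬ ok q g f} else {f ∈ V | ok q g f})
        (if c g then m else m + 1)) :
      GuessForce ok V (m + 1)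

/-- `opt_weak,s,r(F)`: the selection model. In each round the adversary chooses `r` (not
necessarily distinct) inputs `x 0, …, x (r-1)`, and the learner guesses which of them
maximizes the target permutation; weak reinforcement. -/
noncomputable def optSel (n r : ℕ) (F : Set (Equiv.Perm (Fin n))) : ℕ :=
  sSup {m | GuessForce
    (fun (x : Fin r → Fin n) (i₀ : Fin r) f => ∀ i, f (x i) ≤ f (x i₀)) F m}

section GFlem
variable {α Q A : Type*} {ok : Q → A → α → Prop}

lemma gf_nonempty [Nonempty A] {V : Set α} {m : ℕ} (h : GuessForce ok V m) : V.Nonempty := by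
  induction h with
  | zero V h => exact h
  | step V m q c hne h ih =>
    obtain ⟨f, hf⟩ := hne (Classical.arbitrary A)
    split at hf
    · exact ⟨f, hf.1⟩
    · exact ⟨f, hf.1⟩

lemma gf_mono {V : Set α} {m : ℕ} (h : GuessForce ok V m) :
    ∀ {W : Set α}, V ⊆ W → GuessForce ok W m := by
  induction h with
  | zero V h => exact fun hVW => .zero _ (h.mono hVW)
  | step V m q c hne h ih =>
    intro W hVW
    refine .step W m q c (fun g => ?_) (fun g => ?_)
    · obtain ⟨f, hf⟩ := hne g
      refine ⟨f, ?_⟩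
      by_cases hc : c g = true <;>
        simp only [hc, Bool.false_eq_true, if_true, if_false] at hf ⊢ <;>
        exact ⟨hVW hf.1, hf.2⟩
    · refine ih g (fun f hf => ?_)
      by_cases hc : c g = true <;>
        simp only [hc, Bool.false_eq_true, if_true, if_false] at hf ⊢ <;>
        exact ⟨hVW hf.1, hf.2⟩

lemma gf_anti [Nonempty A] {V : Set α} {m : ℕ} (h : GuessForce ok V m) :
    ∀ {m' : ℕ}, m' ≤ m → GuessForce ok V m' := by
  induction h with
  | zero V h => exact fun hm => by simpa [Nat.le_zero.mp hm] using GuessForce.zero V h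
  | step V m q c hne h ih =>
    intro m' hm
    match m', hm with
    | 0, _ => exact .zero V (gf_nonempty (.step V m q c hne h))
    | (k+1), hm =>
      refine .step V k q c hne (fun g => ih g ?_)
      by_cases hc : c g = true <;> simp [hc] <;> omega

lemma gf_card [Finite α] [Nonempty A] (hok : ∀ (q : Q) (f : α), ∃ g, ok q g f)
    {V : Set α} {m : ℕ} (h : GuessForce ok V m) : m < V.ncard := by
  induction h with
  | zero V h => exact h.ncard_pos V.toFinite
  | step V m q c hne h ih =>
    obtain ⟨f, hf⟩ := gf_nonempty (.step V m q c hne h)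
    obtain ⟨g, hg⟩ := hok q f
    have hsub : (if c g then {f ∈ V | ¬ ok q g f} else {f ∈ V | ok q g f}) ⊆ V := by
      split <;> exact fun x hx => hx.1
    by_cases hc : c g = true
    · have h1 := ih g
      simp only [hc, if_true] at h1 hsub
      have hss : {f ∈ V | ¬ ok q g f} ⊂ V := ⟨hsub, fun hVs => (hVs hf).2 hg⟩
      have := Set.ncard_lt_ncard hss V.toFinite
      omega
    · simp only [Bool.not_eq_true] at hc
      have h1 := ih g
      simp only [hc, Bool.false_eq_true, if_false] at h1 hsub
      have := Set.ncard_le_ncard hsub V.toFinite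
      omega

end GFlem

namespace Stmt18


def gcost : List ℕ → ℕ
  | [] => 0
  | a :: t => (t.map (min a)).sum + gcost t

def bhn : List ℕ → ℕ → List ℕ
  | [], _ => []
  | a :: t, 0 => if a ≤ 1 then t else (a - 1) :: t
  | a :: t, (j+1) => a :: bhn t j

variable {X : Type*}

lemma min_le_one_add_min_pred (x b : ℕ) : min x b ≤ 1 + min (x - 1) b := by
  rcases le_total x b with h | h
  · rw [min_eq_left h, min_eq_left (by omega)]; omega
  · rw [min_eq_right h]; have := min_le_right (x - 1) b; omega

lemma sum_map_min_one {t : List ℕ} (h : ∀ a ∈ t, a ≠ 0) : (t.map (min 1)).sum = t.length := by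
  induction t with
  | nil => simp
  | cons b s ih =>
    have hb := h b (by simp)
    have h1 : min 1 b = 1 := by omega
    simp only [List.map_cons, List.sum_cons, h1, List.length_cons,
      ih (fun a ha => h a (by simp [ha]))]
    omega

lemma sum_map_one_add (f : ℕ → ℕ) (t : List ℕ) :
    (t.map (fun b => 1 + f b)).sum = t.length + (t.map f).sum := by
  induction t with
  | nil => simp
  | cons b s ih => simp only [List.map_cons, List.sum_cons, List.length_cons, ih]; omega

lemma sum_map_min_le (x : ℕ) : ∀ (t : List ℕ) (i : ℕ), i < t.length →
    (t.map (min x)).sum ≤ 1 + ((bhn t i).map (min x)).sum := by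
  intro t
  induction t with
  | nil => intro i hi; simp at hi
  | cons y s ih =>
    intro i hi
    match i with
    | 0 =>
      by_cases hy : y ≤ 1
      · simp only [bhn, if_pos hy, List.map_cons, List.sum_cons]
        have : min x y ≤ 1 := le_trans (min_le_right _ _) hy
        omega
      · simp only [bhn, if_neg hy, List.map_cons, List.sum_cons]
        have := min_le_one_add_min_pred y x
        rw [min_comm y x, min_comm (y-1) x] at this
        omega
    | (i+1) =>
      simp only [bhn, List.map_cons, List.sum_cons]
      have := ih i (by simpa using hi)
      omega

lemma gcost_bhn : ∀ (ns : List ℕ) (j : ℕ), (∀ a ∈ ns, a ≠ 0) → j < ns.length →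
    gcost ns ≤ (ns.length - 1) + gcost (bhn ns j) := by
  intro ns
  induction ns with
  | nil => intro j h hj; simp at hj
  | cons x t ih =>
    intro j hpos hj
    match j with
    | 0 =>
      by_cases hx : x ≤ 1
      · simp only [bhn, if_pos hx, gcost]
        have hx1 : x = 1 := by have := hpos x (by simp); omega
        subst hx1
        rw [sum_map_min_one (fun a ha => hpos a (by simp [ha]))]
        simp only [List.length_cons]
        omega
      · simp only [bhn, if_neg hx, gcost]
        have h1 : (t.map (min x)).sum ≤ t.length + (t.map (min (x-1))).sum := by
          have h2 := List.sum_le_sum (l := t) (f := min x) (g := fun b => 1 + min (x-1) b)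
            (fun b _ => min_le_one_add_min_pred x b)
          rw [sum_map_one_add] at h2
          exact h2
        simp only [List.length_cons]
        omega
    | (j+1) =>
      simp only [bhn, gcost, List.length_cons]
      have h1 := sum_map_min_le x t j (by simpa using hj)
      have h2 := ih j (fun a ha => hpos a (by simp [ha])) (by simpa using hj)
      have h3 : j < t.length := by simpa using hj
      omega

lemma gcost_replicate (k a : ℕ) : gcost (List.replicate k a) = k.choose 2 * a := by
  induction k with
  | zero => simp [gcost]
  | succ k ih =>
    rw [List.replicate_succ]
    simp only [gcost, ih]
    have : (List.replicate k a).map (min a) = List.replicate k a := by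
      rw [List.map_replicate, min_self]
    rw [this, List.sum_replicate, smul_eq_mul]
    have hcc : (k+1).choose 2 = k + k.choose 2 := by
      rw [Nat.choose_succ_succ]
      simp [Nat.choose_one_right]
    rw [hcc, Nat.add_mul]


variable {X : Type*} [Inhabited X]

def bls : List (List X) → ℕ → List (List X)
  | [], _ => []
  | l :: t, 0 => if l.tail.isEmpty then t else l.tail :: t
  | l :: t, (j+1) => l :: bls t j

omit [Inhabited X] in
lemma bls_ne : ∀ (ls : List (List X)) (j : ℕ), (∀ l ∈ ls, l ≠ []) →
    ∀ l ∈ bls ls j, l ≠ [] := by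
  intro ls
  induction ls with
  | nil => intro j h l hl; simp [bls] at hl
  | cons a t ih =>
    intro j h l hl
    match j with
    | 0 =>
      by_cases ha : a.tail.isEmpty
      · simp only [bls, if_pos ha] at hl
        exact h l (List.mem_cons_of_mem _ hl)
      · simp only [bls, if_neg ha] at hl
        rcases List.mem_cons.mp hl with hl | hl
        · subst hl; simpa [List.isEmpty_iff] using ha
        · exact h l (List.mem_cons_of_mem _ hl)
    | (j+1) =>
      rcases List.mem_cons.mp hl with hl | hl
      · subst hl; exact h _ (by simp)
      · exact ih j (fun l' hl' => h l' (List.mem_cons_of_mem _ hl')) l hl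

omit [Inhabited X] in
lemma bls_length_le : ∀ (ls : List (List X)) (j : ℕ), (bls ls j).length ≤ ls.length := by
  intro ls
  induction ls with
  | nil => intro j; simp [bls]
  | cons a t ih =>
    intro j
    match j with
    | 0 =>
      by_cases ha : a.tail.isEmpty
      · simp only [bls, if_pos ha, List.length_cons]; omega
      · simp only [bls, if_neg ha, List.length_cons]; omega
    | (j+1) =>
      simp only [bls, List.length_cons]
      exact Nat.succ_le_succ (ih j)

omit [Inhabited X] in
lemma bls_map_length : ∀ (ls : List (List X)) (j : ℕ),
    (bls ls j).map List.length = bhn (ls.map List.length) j := by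
  intro ls
  induction ls with
  | nil => intro j; simp [bls, bhn]
  | cons a t ih =>
    intro j
    match j with
    | 0 =>
      by_cases ha : a.tail.isEmpty
      · have h1 : a.length ≤ 1 := by
          cases a <;> simp_all [List.isEmpty_iff]
        simp [bls, ha, bhn, h1]
      · have h1 : ¬ a.length ≤ 1 := by
          cases a with
          | nil => simp at ha
          | cons x s => cases s <;> simp_all
        have h2 : a.tail.length = a.length - 1 := by cases a <;> simp
        simp [bls, ha, bhn, h1, h2]
    | (j+1) => simp [bls, bhn, ih j]

lemma bls_flatten : ∀ (ls : List (List X)) (j : ℕ) (hj : j < ls.length),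
    ls.get ⟨j, hj⟩ ≠ [] →
    ls.flatten.Perm ((ls.get ⟨j, hj⟩).headI :: (bls ls j).flatten) := by
  intro ls
  induction ls with
  | nil => intro j hj; simp at hj
  | cons a t ih =>
    intro j hj hne
    match j with
    | 0 =>
      simp only [List.get] at hne ⊢
      cases a with
      | nil => simp at hne
      | cons x s =>
        cases s with
        | nil => simp [bls]
        | cons y s' => simp [bls]
    | (j+1) =>
      simp only [List.get] at hne ⊢
      have hj' : j < t.length := by simpa using hj
      have h1 := ih j hj' hne
      simp only [bls, List.flatten_cons]
      exact (h1.append_left a).trans List.perm_middle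

omit [Inhabited X] in
lemma mem_bls_of_ne : ∀ (ls : List (List X)) (i j : ℕ) (hi : i < ls.length),
    j < ls.length → i ≠ j → ls.get ⟨i, hi⟩ ∈ bls ls j := by
  intro ls
  induction ls with
  | nil => intro i j hi; simp at hi
  | cons a t ih =>
    intro i j hi hj hij
    match j with
    | 0 =>
      match i with
      | 0 => omega
      | (i+1) =>
        have hmem : (a :: t).get ⟨i+1, hi⟩ ∈ t := by
          simp only [List.get]
          exact List.get_mem _ _
        by_cases ha : a.tail.isEmpty
        · simpa [bls, ha] using hmem
        · simp [bls, ha, hmem]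
    | (j+1) =>
      match i with
      | 0 => simp [bls, List.get]
      | (i+1) =>
        simp only [bls, List.get, List.mem_cons]
        right
        exact ih i j (by simpa using hi) (by simpa using hj) (by omega)

omit [Inhabited X] in
lemma tail_mem_bls : ∀ (ls : List (List X)) (j : ℕ) (hj : j < ls.length),
    (ls.get ⟨j, hj⟩).tail ≠ [] → (ls.get ⟨j, hj⟩).tail ∈ bls ls j := by
  intro ls
  induction ls with
  | nil => intro j hj; simp at hj
  | cons a t ih =>
    intro j hj hne
    match j with
    | 0 =>
      simp only [List.get] at hne ⊢
      have : a.tail.isEmpty = false := by simpa [List.isEmpty_iff] using hne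
      simp [bls, this]
    | (j+1) =>
      simp only [List.get, bls, List.mem_cons] at hne ⊢
      right
      exact ih j (by simpa using hj) hne

def chunksBy (c : ℕ) : ℕ → List X → List (List X)
  | 0, _ => []
  | (s+1), L => L.take c :: chunksBy c s (L.drop c)

omit [Inhabited X] in
lemma chunksBy_length (c : ℕ) : ∀ (s : ℕ) (L : List X), (chunksBy c s L).length = s := by
  intro s
  induction s with
  | zero => intro L; simp [chunksBy]
  | succ s ih => intro L; simp [chunksBy, ih]

omit [Inhabited X] in
lemma mem_chunksBy_length (c : ℕ) : ∀ (s : ℕ) (L : List X), L.length = s * c →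
    ∀ H ∈ chunksBy c s L, H.length = c := by
  intro s
  induction s with
  | zero => intro L h H hH; simp [chunksBy] at hH
  | succ s ih =>
    intro L h H hH
    simp only [chunksBy, List.mem_cons] at hH
    rcases hH with hH | hH
    · subst hH
      simp only [List.length_take]
      have : c ≤ L.length := by rw [h, Nat.succ_mul]; omega
      omega
    · exact ih (L.drop c) (by simp [h, Nat.succ_mul]) H hH

omit [Inhabited X] in
lemma flatten_chunksBy (c : ℕ) : ∀ (s : ℕ) (L : List X), L.length = s * c →
    (chunksBy c s L).flatten = L := by
  intro s
  induction s with
  | zero => intro L h; simpa [chunksBy] using (List.length_eq_zero_iff.mp (by omega)).symm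
  | succ s ih =>
    intro L h
    simp only [chunksBy, List.flatten_cons]
    rw [ih (L.drop c) (by simp [h, Nat.succ_mul]), List.take_append_drop]

omit [Inhabited X] in
lemma perm_flatten_of_forall₂ : ∀ {l₁ l₂ : List (List X)},
    List.Forall₂ (fun a b => a.Perm b) l₁ l₂ → l₁.flatten.Perm l₂.flatten := by
  intro l₁ l₂ h
  induction h with
  | nil => simp
  | cons h _ ih => simpa using h.append ih

omit [Inhabited X] in
lemma map_length_of_forall₂ : ∀ {l₁ l₂ : List (List X)},
    List.Forall₂ (fun a b => a.Perm b) l₁ l₂ → l₁.map List.length = l₂.map List.length := by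
  intro l₁ l₂ h
  induction h with
  | nil => simp
  | cons h _ ih => simp [h.length_eq, ih]


variable {n : ℕ}

def Dec (f : Equiv.Perm (Fin n)) (K : List (Fin n)) : Prop :=
  List.Chain' (fun a b => f b < f a) K

def VS (Cs : List (List (Fin n))) : Set (Equiv.Perm (Fin n)) :=
  {f | ∀ K ∈ Cs, Dec f K}

lemma VS_anti {Cs Ds : List (List (Fin n))} (h : ∀ K ∈ Ds, K ∈ Cs) : VS Cs ⊆ VS Ds :=
  fun f hf K hK => hf K (h K hK)

lemma exists_perm_chain (K : List (Fin n)) (hK : K.Nodup) :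
    ∃ f : Equiv.Perm (Fin n), Dec f K := by
  classical
  set K' : List (Fin n) := K ++ (List.finRange n).filter (fun x => x ∉ K) with hK'def
  have hlenK : K.length ≤ K'.length := by
    simp only [hK'def, List.length_append]; omega
  have hpre : ∀ (i : ℕ) (hi : i < K.length), K.get ⟨i, hi⟩ = K'.get ⟨i, by omega⟩ := by
    intro i hi
    exact (List.getElem_append_left hi).symm
  have hnd : K'.Nodup := by
    refine List.Nodup.append hK ((List.nodup_finRange n).filter _) ?_
    intro a ha ha'
    simp only [List.mem_filter, decide_eq_true_eq] at ha'
    exact ha'.2 ha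
  have hmem : ∀ x : Fin n, x ∈ K' := by
    intro x
    by_cases hx : x ∈ K
    · exact List.mem_append_left _ hx
    · exact List.mem_append_right _ (by simp [List.mem_filter, hx])
  have hlen : K'.length = n := by
    have h1 : K'.toFinset.card = K'.length := List.toFinset_card_of_nodup hnd
    have h2 : K'.toFinset = Finset.univ := by ext x; simp [hmem x]
    rw [h2] at h1
    simpa using h1.symm
  let e0 : Fin K'.length ≃ Fin n := hnd.getEquivOfForallMemList K' hmem
  let f : Equiv.Perm (Fin n) := (e0.symm.trans (finCongr hlen)).trans Fin.revPerm
  have hfval : ∀ (i : ℕ) (hi : i < K.length),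
      f (K.get ⟨i, hi⟩) = Fin.rev (finCongr hlen ⟨i, by omega⟩) := by
    intro i hi
    have h1 : e0.symm (K.get ⟨i, hi⟩) = ⟨i, by omega⟩ := by
      rw [hpre i hi]
      have h2 : e0 ⟨i, by omega⟩ = K'.get ⟨i, by omega⟩ := rfl
      rw [← h2]
      exact e0.symm_apply_apply _
    show Fin.revPerm ((finCongr hlen) (e0.symm (K.get ⟨i, hi⟩))) = _
    rw [h1]
    rfl
  refine ⟨f, List.isChain_iff_getElem.mpr ?_⟩
  intro i hi
  show f (K.get ⟨i+1, by omega⟩) < f (K.get ⟨i, by omega⟩)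
  rw [hfval i (by omega), hfval (i+1) (by omega)]
  rw [Fin.rev_lt_rev]
  simp [Fin.lt_def]

lemma dec_of_flatten {f : Equiv.Perm (Fin n)} : ∀ {Ls : List (List (Fin n))},
    Dec f Ls.flatten → ∀ L ∈ Ls, Dec f L := by
  intro Ls
  induction Ls with
  | nil => intro _ L hL; simp at hL
  | cons A t ih =>
    intro h L hL
    rw [List.flatten_cons] at h
    rcases List.mem_cons.mp hL with hL | hL
    · subst hL; exact (List.isChain_append.mp h).1
    · exact ih (List.isChain_append.mp h).2.1 L hL


def Ok (n r : ℕ) : (Fin r → Fin n) → Fin r → Equiv.Perm (Fin n) → Prop :=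
  fun x i₀ f => ∀ i, f (x i) ≤ f (x i₀)

lemma ext_force {n r : ℕ} {k : ℕ} (hk : k ≤ r) (hd : Fin k → Fin n)
    (W : Fin k → Set (Equiv.Perm (Fin n)))
    (hdom : ∀ j, ∀ f ∈ W j, ∀ j', j' ≠ j → f (hd j') < f (hd j)) :
    ∀ (c : ℕ) (T : Finset (Fin k)), c + 1 ≤ T.card → ∀ m,
      (∀ j ∈ T, GuessForce (Ok n r) (W j) m) →
      GuessForce (Ok n r) (⋃ j ∈ T, W j) (m + c) := by
  intro c
  induction c with
  | zero =>
    intro T hT m hGF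
    obtain ⟨j₀, hj₀⟩ := Finset.card_pos.mp (show 0 < T.card by omega)
    exact gf_mono (hGF j₀ hj₀) (Set.subset_biUnion_of_mem hj₀)
  | succ c ih =>
    intro T hT m hGF
    obtain ⟨j₀, _⟩ := Finset.card_pos.mp (show 0 < T.card by omega)
    have hk0 : 0 < k := j₀.pos
    haveI : Nonempty (Fin r) := ⟨⟨0, lt_of_lt_of_le hk0 hk⟩⟩
    set emb : Fin r → Fin k := fun i => if h : (i : ℕ) < k then ⟨i, h⟩ else ⟨0, hk0⟩ with hemb
    set q : Fin r → Fin n := fun i => hd (emb i) with hq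
    have key : ∀ g : Fin r,
        (⋃ j ∈ T.erase (emb g), W j) ⊆ {f ∈ ⋃ j ∈ T, W j | ¬ Ok n r q g f} := by
      intro g f hf
      simp only [Set.mem_iUnion, exists_prop] at hf
      obtain ⟨j, hjT, hfW⟩ := hf
      have hjT' := Finset.mem_of_mem_erase hjT
      have hne : j ≠ emb g := Finset.ne_of_mem_erase hjT
      refine ⟨Set.mem_biUnion hjT' hfW, fun hok => ?_⟩
      have hltr : (j : ℕ) < r := lt_of_lt_of_le j.2 hk
      have hqj : q ⟨(j : ℕ), hltr⟩ = hd j := by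
        simp only [hq, hemb]
        rw [dif_pos j.2]
      have h2 := hok ⟨(j : ℕ), hltr⟩
      rw [hqj] at h2
      have h3 : f (q g) < f (hd j) := hdom j f hfW (emb g) (Ne.symm hne)
      exact absurd h2 (not_le.mpr h3)
    have hcard : ∀ g : Fin r, c + 1 ≤ (T.erase (emb g)).card := by
      intro g
      have := Finset.pred_card_le_card_erase (s := T) (a := emb g)
      omega
    refine GuessForce.step _ (m + c) q (fun _ => true) (fun g => ?_) (fun g => ?_)
    · simp only [if_true]
      obtain ⟨j₁, hj₁⟩ := Finset.card_pos.mp (show 0 < (T.erase (emb g)).card from lt_of_lt_of_le (Nat.succ_pos c) (hcard g))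
      obtain ⟨f, hf⟩ := gf_nonempty (hGF j₁ (Finset.mem_of_mem_erase hj₁))
      exact ⟨f, key g (Set.mem_biUnion hj₁ hf)⟩
    · simp only [if_true]
      exact gf_mono
        (ih (T.erase (emb g)) (hcard g) m (fun j hj => hGF j (Finset.mem_of_mem_erase hj)))
        (key g)

def Interleaves {n : ℕ} (ls : List (List (Fin n))) (L : List (Fin n)) : Prop :=
  ls.flatten.Perm L ∧ ∀ l ∈ ls, l.Sublist L

lemma head?_eq_headI {n : ℕ} [Inhabited (Fin n)] {l : List (Fin n)} (h : l ≠ []) :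
    l.head? = some l.headI := by
  cases l with
  | nil => exact absurd rfl h
  | cons a t => rfl

lemma headI_cons_tail {n : ℕ} [Inhabited (Fin n)] {l : List (Fin n)} (h : l ≠ []) :
    l.headI :: l.tail = l := by
  cases l with
  | nil => exact absurd rfl h
  | cons a t => rfl

lemma merge_force {n r : ℕ} : ∀ (N : ℕ) (ls : List (List (Fin n))),
    ls.flatten.length ≤ N →
    (∀ l ∈ ls, l ≠ []) → ls.length ≤ r →
    ∀ (O : List (Fin n)) (S : List (List (Fin n))) (m : ℕ),
      (∀ L, Interleaves ls L → GuessForce (Ok n r) (VS (S ++ [O ++ L])) m) →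
      GuessForce (Ok n r) (VS (S ++ O :: ls.map (O ++ ·)))
        (m + gcost (ls.map List.length)) := by
  intro N
  induction N with
  | zero =>
    intro ls hlen hne hk O S m hcont
    have hnil : ls = [] := by
      cases ls with
      | nil => rfl
      | cons a t =>
        exfalso
        apply hne a (by simp)
        have : a.length = 0 := by
          simp only [List.flatten_cons, List.length_append, Nat.le_zero] at hlen
          omega
        exact List.length_eq_zero_iff.mp this
    subst hnil
    have := hcont [] ⟨by simp, by simp⟩
    simpa [gcost] using this
  | succ N ihN =>
    intro ls hlen hne hk O S m hcont
    cases hls : ls with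
    | nil =>
      subst hls
      have := hcont [] ⟨by simp, by simp⟩
      simpa [gcost] using this
    | cons l₀ t =>
      haveI : Inhabited (Fin n) := ⟨l₀.head (by subst hls; exact hne l₀ (by simp))⟩
      subst hls
      set ls := l₀ :: t with hlsdef
      set k := ls.length with hkdef
      have hkpos : 0 < k := by simp [hkdef, hlsdef]
      haveI : Nonempty (Fin r) := ⟨⟨0, lt_of_lt_of_le hkpos hk⟩⟩
      set hd : Fin k → Fin n := fun j => (ls.get j).headI with hhd
      set W : Fin k → Set (Equiv.Perm (Fin n)) := fun j =>
        VS (S ++ (O ++ [hd j]) :: (bls ls j.1).map (fun l => (O ++ [hd j]) ++ l)) with hW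
      have hgetne : ∀ j : Fin k, ls.get j ≠ [] := fun j => hne _ (ls.get_mem j)
      have hgethead? : ∀ j : Fin k, (ls.get j).head? = some (hd j) :=
        fun j => head?_eq_headI (hgetne j)
      have hconshd : ∀ j : Fin k, hd j :: (ls.get j).tail = ls.get j :=
        fun j => headI_cons_tail (hgetne j)
      -- domination
      have hdom : ∀ j, ∀ f ∈ W j, ∀ j', j' ≠ j → f (hd j') < f (hd j) := by
        intro j f hf j' hne'
        have hvne : j'.1 ≠ j.1 := by simpa [Fin.ext_iff] using hne'
        have hmem : ls.get j' ∈ bls ls j.1 := mem_bls_of_ne ls j'.1 j.1 j'.2 j.2 hvne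
        have hchain : Dec f ((O ++ [hd j]) ++ ls.get j') := by
          apply hf
          refine List.mem_append_right _ (List.mem_cons_of_mem _ ?_)
          exact List.mem_map_of_mem hmem
        have h3 := (List.isChain_append.mp hchain).2.2
        exact h3 (hd j) (by rw [List.getLast?_concat]; rfl) (hd j') (by rw [hgethead? j']; rfl)
      -- per-branch continuation via IH
      have hbranch : ∀ j : Fin k,
          GuessForce (Ok n r) (W j) (m + gcost ((bls ls j.1).map List.length)) := by
        intro j
        have hperm := bls_flatten ls j.1 j.2 (hgetne j)
        have hlen' : (bls ls j.1).flatten.length ≤ N := by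
          have := hperm.length_eq
          simp only [List.length_cons] at this
          omega
        refine ihN (bls ls j.1) hlen' (bls_ne ls j.1 hne) (le_trans (bls_length_le ls j.1) hk)
          (O ++ [hd j]) S m ?_
        intro L' hI
        have hIL : Interleaves ls (hd j :: L') := by
          constructor
          · exact hperm.trans (hI.1.cons (hd j))
          · intro l hl
            obtain ⟨⟨i, hi⟩, rfl⟩ := List.mem_iff_get.mp hl
            by_cases hij : i = j.1
            · have : ls.get ⟨i, hi⟩ = ls.get j := by congr 1; exact Fin.ext hij
              rw [this, ← hconshd j]
              apply List.Sublist.cons₂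
              by_cases ht : (ls.get j).tail = []
              · rw [ht]; exact List.nil_sublist _
              · exact hI.2 _ (tail_mem_bls ls j.1 j.2 ht)
            · exact (hI.2 _ (mem_bls_of_ne ls i j.1 hi j.2 hij)).cons _
        have := hcont (hd j :: L') hIL
        rw [List.append_cons O (hd j) L'] at this
        exact this
      -- uniformize budgets
      set G := gcost (ls.map List.length) with hG
      have hgb : ∀ j : Fin k, G ≤ (k - 1) + gcost ((bls ls j.1).map List.length) := by
        intro j
        rw [bls_map_length]
        have := gcost_bhn (ls.map List.length) j.1
          (by intro a ha; obtain ⟨l, hl, rfl⟩ := List.mem_map.mp ha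
              simpa using hne l hl) (by rw [List.length_map]; exact j.2)
        simpa [hkdef] using this
      have hbranch' : ∀ j : Fin k, GuessForce (Ok n r) (W j) (m + (G - (k - 1))) := by
        intro j
        refine gf_anti (hbranch j) ?_
        have := hgb j
        omega
      -- extraction
      have hext := ext_force (n := n) (r := r) hk hd W hdom
        (k - 1) Finset.univ (by simp only [Finset.card_univ, Fintype.card_fin]; omega)
        (m + (G - (k - 1))) (fun j _ => hbranch' j)
      have hext2 : GuessForce (Ok n r) (⋃ j ∈ (Finset.univ : Finset (Fin k)), W j) (m + G) := by
        refine gf_anti hext ?_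
        omega
      -- inclusion
      refine gf_mono hext2 ?_
      intro f hf
      simp only [Set.mem_iUnion, exists_prop] at hf
      obtain ⟨j, _, hfW⟩ := hf
      intro K hK
      rcases List.mem_append.mp hK with hK | hK
      · exact hfW K (List.mem_append_left _ hK)
      · have hOj : Dec f (O ++ [hd j]) :=
          hfW _ (List.mem_append_right _ List.mem_cons_self)
        rcases List.mem_cons.mp hK with hK | hK
        · subst hK
          exact (List.isChain_append.mp hOj).1
        · obtain ⟨l, hl, rfl⟩ := List.mem_map.mp hK
          obtain ⟨⟨i, hi⟩, rfl⟩ := List.mem_iff_get.mp hl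
          by_cases hij : i = j.1
          · have hgeq : ls.get ⟨i, hi⟩ = ls.get j := by congr 1; exact Fin.ext hij
            rw [hgeq, ← hconshd j]
            by_cases ht : (ls.get j).tail = []
            · rw [ht]
              exact hOj
            · have htm : Dec f ((O ++ [hd j]) ++ (ls.get j).tail) := by
                apply hfW
                refine List.mem_append_right _ (List.mem_cons_of_mem _ ?_)
                exact List.mem_map_of_mem (tail_mem_bls ls j.1 j.2 ht)
              rw [List.append_cons O (hd j) (ls.get j).tail]
              exact htm
          · have hmem : ls.get ⟨i, hi⟩ ∈ bls ls j.1 := mem_bls_of_ne ls i j.1 hi j.2 hij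
            have hc2 : Dec f ((O ++ [hd j]) ++ ls.get ⟨i, hi⟩) := by
              apply hfW
              refine List.mem_append_right _ (List.mem_cons_of_mem _ ?_)
              exact List.mem_map_of_mem hmem
            have e1 := List.isChain_append.mp hOj
            have e2 := List.isChain_append.mp hc2
            refine List.isChain_append.mpr ⟨e1.1, e2.2.1, ?_⟩
            intro x hx y hy
            refine lt_trans (e2.2.2 (hd j) (by rw [List.getLast?_concat]; rfl) y hy) ?_
            exact e1.2.2 x hx (hd j) rfl

def dcost (r : ℕ) : ℕ → ℕ
  | 0 => 0
  | (t+1) => r * dcost r t + r.choose 2 * r ^ t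

lemma sort_seq {n r t : ℕ}
    (hSort : ∀ (G : List (Fin n)), G.length = r ^ t →
      ∀ (S : List (List (Fin n))) (m : ℕ),
      (∀ L, L.Perm G → GuessForce (Ok n r) (VS (S ++ [L])) m) →
      GuessForce (Ok n r) (VS S) (m + dcost r t)) :
    ∀ (Hs : List (List (Fin n))), (∀ H ∈ Hs, H.length = r ^ t) →
    ∀ (S : List (List (Fin n))) (m : ℕ),
      (∀ Ls, List.Forall₂ (fun a b => a.Perm b) Ls Hs →
        GuessForce (Ok n r) (VS (S ++ Ls)) m) →
      GuessForce (Ok n r) (VS S) (m + Hs.length * dcost r t) := by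
  intro Hs
  induction Hs with
  | nil =>
    intro h S m hc
    simpa using hc [] List.Forall₂.nil
  | cons H Hs' ih =>
    intro h S m hc
    have step : GuessForce (Ok n r) (VS S) ((m + Hs'.length * dcost r t) + dcost r t) := by
      refine hSort H (h H (by simp)) S (m + Hs'.length * dcost r t) ?_
      intro L hL
      refine ih (fun H' hH' => h H' (by simp [hH'])) (S ++ [L]) m ?_
      intro Ls hf2
      have := hc (L :: Ls) (List.Forall₂.cons hL hf2)
      simpa [List.append_assoc] using this
    have heq : (m + Hs'.length * dcost r t) + dcost r t = m + (Hs'.length + 1) * dcost r t := by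
      ring
    rw [heq] at step
    simpa using step

lemma sort_force {n r : ℕ} (hr : 1 ≤ r) : ∀ (t : ℕ) (G : List (Fin n)), G.length = r ^ t →
    ∀ (S : List (List (Fin n))) (m : ℕ),
      (∀ L, L.Perm G → GuessForce (Ok n r) (VS (S ++ [L])) m) →
      GuessForce (Ok n r) (VS S) (m + dcost r t) := by
  intro t
  induction t with
  | zero =>
    intro G hG S m hc
    obtain ⟨a, rfl⟩ := List.length_eq_one_iff.mp (by simpa using hG)
    have h1 := hc [a] (List.Perm.refl _)
    have h2 := gf_mono h1 (VS_anti (fun K hK => List.mem_append_left _ hK))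
    simpa [dcost] using h2
  | succ t ih =>
    intro G hG S m hc
    set Gs := chunksBy (r ^ t) r G with hGs
    have hGlen : G.length = r * r ^ t := by rw [hG, pow_succ]; ring
    have hmemlen : ∀ H ∈ Gs, H.length = r ^ t := mem_chunksBy_length _ r G hGlen
    have hGslen : Gs.length = r := chunksBy_length _ r G
    have hflat : Gs.flatten = G := flatten_chunksBy _ r G hGlen
    have hseq := sort_seq ih Gs hmemlen S (m + r.choose 2 * r ^ t) ?_
    · rw [hGslen] at hseq
      have heq : (m + r.choose 2 * r ^ t) + r * dcost r t = m + dcost r (t+1) := by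
        simp only [dcost]
        ring
      rw [heq] at hseq
      exact hseq
    · intro Ls hf2
      have hml := map_length_of_forall₂ hf2
      have hLslen : Ls.length = r := by rw [hf2.length_eq, hGslen]
      have hnonnil : ∀ l ∈ Ls, l ≠ [] := by
        intro l hl hlnil
        have h1 : l.length ∈ Gs.map List.length := by
          rw [← hml]; exact List.mem_map_of_mem hl
        obtain ⟨H, hH, hHl⟩ := List.mem_map.mp h1
        have := hmemlen H hH
        rw [this] at hHl
        rw [hlnil] at hHl
        simp at hHl
        have : 0 < r ^ t := Nat.pow_pos hr
        omega
      have hmerge := merge_force (n := n) (r := r) Ls.flatten.length Ls (le_refl _)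
        hnonnil (by rw [hLslen]) [] S m ?_
      · have hrep : Ls.map List.length = List.replicate r (r ^ t) := by
          rw [hml]
          refine List.eq_replicate_iff.mpr ⟨by rw [List.length_map, hGslen], ?_⟩
          intro b hb
          obtain ⟨H, hH, rfl⟩ := List.mem_map.mp hb
          exact hmemlen H hH
        rw [hrep, gcost_replicate] at hmerge
        have hmaps : Ls.map (fun l => [] ++ l) = Ls := by simp
        rw [hmaps] at hmerge
        exact gf_mono hmerge (VS_anti (fun K hK => by
          rcases List.mem_append.mp hK with h | h
          · exact List.mem_append_left _ h
          · exact List.mem_append_right _ (List.mem_cons_of_mem _ h)))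
      · intro L hI
        have hLG : L.Perm G := by
          have h1 : L.Perm Ls.flatten := hI.1.symm
          have h2 : Ls.flatten.Perm Gs.flatten := perm_flatten_of_forall₂ hf2
          rw [hflat] at h2
          exact h1.trans h2
        simpa using hc L hLG

lemma dcost_closed {r : ℕ} : ∀ s : ℕ, dcost r (s + 1) = (s + 1) * r.choose 2 * r ^ s := by
  intro s
  induction s with
  | zero => simp [dcost]
  | succ s ih =>
    show r * dcost r (s + 1) + r.choose 2 * r ^ (s + 1) = _
    rw [ih, pow_succ]
    ring

lemma construct {n r : ℕ} (hr : 1 ≤ r) (t q : ℕ) (hq : q * r ^ t ≤ n) :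
    GuessForce (Ok n r) (Set.univ : Set (Equiv.Perm (Fin n))) (q * dcost r t) := by
  set B := r ^ t with hB
  set master := (List.finRange n).take (q * B) with hmaster
  have hmlen : master.length = q * B := by
    rw [hmaster, List.length_take, List.length_finRange]
    omega
  set Gs := chunksBy B q master with hGs
  have h := sort_seq (sort_force hr t) Gs (mem_chunksBy_length _ _ _ hmlen) [] 0 ?_
  · rw [chunksBy_length] at h
    have huniv : VS ([] : List (List (Fin n))) = Set.univ := by
      ext f; simp [VS]
    rw [huniv] at h
    simpa using h
  · intro Ls hf2
    refine GuessForce.zero _ ?_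
    have hnodup : Ls.flatten.Nodup := by
      have h2 : Ls.flatten.Perm Gs.flatten := perm_flatten_of_forall₂ hf2
      have h3 : Gs.flatten = master := flatten_chunksBy _ _ _ hmlen
      have h4 : master.Nodup := (List.take_sublist _ _).nodup (List.nodup_finRange n)
      rw [h3] at h2
      exact h2.nodup_iff.mpr h4
    obtain ⟨f, hf⟩ := exists_perm_chain Ls.flatten hnodup
    refine ⟨f, fun K hK => ?_⟩
    have hK' : K ∈ Ls := by simpa using hK
    exact dec_of_flatten hf K hK'

lemma opt_lower {n r : ℕ} (hr : 2 ≤ r) (t q : ℕ) (hq : q * r ^ t ≤ n) :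
    q * dcost r t ≤ optSel n r (Set.univ : Set (Equiv.Perm (Fin n))) := by
  haveI : Nonempty (Fin r) := ⟨⟨0, by omega⟩⟩
  have hbdd : BddAbove {m | GuessForce (Ok n r)
      (Set.univ : Set (Equiv.Perm (Fin n))) m} := by
    refine ⟨(Set.univ : Set (Equiv.Perm (Fin n))).ncard, fun m hm => ?_⟩
    refine le_of_lt (gf_card (fun qq f => ?_) hm)
    obtain ⟨i₀, hi₀⟩ := Finite.exists_max (fun i => f (qq i))
    exact ⟨i₀, hi₀⟩
  exact le_csSup hbdd (construct (by omega) t q hq)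

end Stmt18

set_option maxHeartbeats 2000000 in
/-- For every `ε > 0` there exists `r₀` such that for every integer
`r ≥ r₀` there exists `n₀` such that for all `n ≥ n₀`,
`opt_weak,s,r(S_n) ≥ (1−ε)·n·r·log_r(n)/2`. -/
theorem stmt18 (ε : ℝ) (hε : 0 < ε) :
    ∃ r₀ : ℕ, ∀ r : ℕ, r₀ ≤ r → ∃ n₀ : ℕ, ∀ n : ℕ, n₀ ≤ n →
      (1 - ε) * n * r * Real.logb r n / 2
        ≤ (optSel n r (Set.univ : Set (Equiv.Perm (Fin n))) : ℝ) := by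
  classical
  set ε' : ℝ := min ε (1/2) with hε'def
  have hε'pos : 0 < ε' := lt_min hε (by norm_num)
  have hε'le : ε' ≤ 1/2 := min_le_right _ _
  have hε'ε : ε' ≤ ε := min_le_left _ _
  set E : ℕ := ⌈(8:ℝ)/ε'⌉₊ + 2 with hE
  refine ⟨E, fun r hr => ⟨r ^ E, fun n hn => ?_⟩⟩
  have hE2 : 2 ≤ E := by rw [hE]; omega
  have hr2 : 2 ≤ r := le_trans hE2 hr
  have hrR : (8:ℝ)/ε' ≤ (r:ℝ) := by
    have h9 : ⌈(8:ℝ)/ε'⌉₊ ≤ E := by rw [hE]; exact Nat.le_add_right _ 2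
    calc (8:ℝ)/ε' ≤ (⌈(8:ℝ)/ε'⌉₊ : ℝ) := Nat.le_ceil _
      _ ≤ (E:ℝ) := Nat.cast_le.mpr h9
      _ ≤ (r:ℝ) := Nat.cast_le.mpr hr
  have hn1 : 1 ≤ n := le_trans (Nat.one_le_pow E r (by omega)) hn
  set e : ℕ := Nat.log r n with he
  have hre : r ^ e ≤ n := Nat.pow_log_le_self r (by omega)
  have hnlt : n < r ^ (e + 1) := Nat.lt_pow_succ_log_self (by omega) n
  have heE : E ≤ e := by
    have h1 := Nat.log_mono_right (b := r) hn
    rwa [← he, Nat.log_pow (by omega : 1 < r)] at h1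
  have he2 : 2 ≤ e := le_trans hE2 heE
  have heR : (8:ℝ)/ε' + 2 ≤ (e:ℝ) := by
    have h1 : (⌈(8:ℝ)/ε'⌉₊ : ℝ) + 2 ≤ (e:ℝ) := by
      have : (E:ℝ) ≤ (e:ℝ) := by exact_mod_cast heE
      rw [hE] at this; push_cast at this; linarith
    have h2 := Nat.le_ceil ((8:ℝ)/ε')
    linarith
  set t : ℕ := e - 1 with ht
  set B : ℕ := r ^ t with hB
  set q : ℕ := n / B with hq
  have hBpos : 0 < B := Nat.pow_pos (a := r) (n := t) (by omega)
  have hqB : q * B ≤ n := Nat.div_mul_le_self n B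
  have hqBn : n < (q + 1) * B := by
    have h1 := Nat.div_add_mod n B
    rw [← hq] at h1
    have h2 := Nat.mod_lt n hBpos
    have h3 : (q + 1) * B = B * q + B := by ring
    omega
  have hrB : r * B ≤ n := by
    have : r * B = r ^ e := by
      rw [hB, ht, ← pow_succ']
      congr 1
      omega
    omega
  -- the combinatorial bound
  have hopt := Stmt18.opt_lower (n := n) (r := r) hr2 t q hqB
  -- move to the reals
  have hM : (q * Stmt18.dcost r t : ℝ) ≤ (optSel n r (Set.univ : Set (Equiv.Perm (Fin n))) : ℝ) := by
    exact_mod_cast hopt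
  have ht12 : t = (e - 2) + 1 := by omega
  have hdc : (Stmt18.dcost r t : ℝ) = ((e:ℝ) - 1) * (r.choose 2 : ℝ) * (r:ℝ) ^ (e - 2) := by
    rw [ht12, Stmt18.dcost_closed]
    push_cast
    have : ((e:ℝ) - 2) + 1 = (e:ℝ) - 1 := by ring
    rw [Nat.cast_sub (by omega)]
    push_cast
    ring
  have hchoose : (r.choose 2 : ℝ) = (r:ℝ) * ((r:ℝ) - 1) / 2 := Nat.cast_choose_two ℝ r
  -- real versions of the integer inequalities
  have hBR : (B:ℝ) = (r:ℝ) ^ t := by rw [hB]; push_cast; ring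
  have hqBR : (n:ℝ) - (B:ℝ) ≤ (q:ℝ) * (B:ℝ) := by
    have : (n:ℝ) < ((q:ℝ) + 1) * (B:ℝ) := by exact_mod_cast hqBn
    nlinarith
  have hrBR : (r:ℝ) * (B:ℝ) ≤ (n:ℝ) := by exact_mod_cast hrB
  have hrpos : (0:ℝ) < r := by positivity
  have hnposR : (0:ℝ) < n := by exact_mod_cast hn1
  have hBposR : (0:ℝ) < (B:ℝ) := by exact_mod_cast hBpos
  have hr1R : (1:ℝ) < (r:ℝ) := by exact_mod_cast hr2
  have he1R : (1:ℝ) ≤ (e:ℝ) - 1 := by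
    have : (2:ℝ) ≤ (e:ℝ) := by exact_mod_cast he2
    linarith
  -- logb bounds
  set L : ℝ := Real.logb r n with hL
  have hL0 : 0 ≤ L := Real.logb_nonneg hr1R (by exact_mod_cast hn1)
  have hLe : L ≤ (e:ℝ) + 1 := by
    have h1 : (n:ℝ) < (r:ℝ) ^ ((e:ℝ) + 1) := by
      have h2 : (n:ℝ) < (r:ℝ) ^ (e + 1 : ℕ) := by exact_mod_cast hnlt
      rwa [show ((e:ℝ) + 1) = ((e + 1 : ℕ) : ℝ) by push_cast; ring,
        Real.rpow_natCast]
    exact le_of_lt ((Real.logb_lt_iff_lt_rpow hr1R hnposR).mpr h1)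
  -- key algebraic inequality
  have hA : 2 * (r:ℝ) ≤ ε'/4 * (r:ℝ)^2 := by
    have h1 : (8:ℝ) ≤ (r:ℝ) * ε' := (div_le_iff₀ hε'pos).mp hrR
    nlinarith [hrpos]
  have hB4 : (2:ℝ) ≤ ε'/4 * ((e:ℝ) + 1) := by
    have h0 : (8:ℝ)/ε' ≤ (e:ℝ) + 1 := by linarith
    have h1 : (8:ℝ) ≤ ((e:ℝ) + 1) * ε' := (div_le_iff₀ hε'pos).mp h0
    linarith
  have hkey : (1 - ε') * ((r:ℝ)^2 * ((e:ℝ) + 1)) ≤ ((e:ℝ) - 1) * ((r:ℝ) - 1)^2 := by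
    have k1 : (1 - ε'/4) * (r:ℝ)^2 ≤ ((r:ℝ) - 1)^2 := by nlinarith
    have k2 : (1 - ε'/4) * ((e:ℝ) + 1) ≤ (e:ℝ) - 1 := by linarith
    have k3 : (1 - ε') ≤ (1 - ε'/4)^2 := by nlinarith
    have p1 : (0:ℝ) ≤ 1 - ε'/4 := by linarith
    have p2 : (0:ℝ) ≤ (r:ℝ)^2 := by positivity
    have p3 : (0:ℝ) ≤ (e:ℝ) + 1 := by linarith
    calc (1 - ε') * ((r:ℝ)^2 * ((e:ℝ) + 1))
        ≤ (1 - ε'/4)^2 * ((r:ℝ)^2 * ((e:ℝ) + 1)) :=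
          mul_le_mul_of_nonneg_right k3 (by positivity)
      _ = ((1 - ε'/4) * (r:ℝ)^2) * ((1 - ε'/4) * ((e:ℝ) + 1)) := by ring
      _ ≤ ((r:ℝ) - 1)^2 * ((e:ℝ) - 1) :=
          mul_le_mul k1 k2 (mul_nonneg p1 p3) (by positivity)
      _ = ((e:ℝ) - 1) * ((r:ℝ) - 1)^2 := by ring
  -- lower bound on M
  have hqBe : (n:ℝ) * (1 - 1/(r:ℝ)) ≤ (q:ℝ) * (B:ℝ) := by
    have h1 : (B:ℝ) ≤ (n:ℝ)/(r:ℝ) := by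
      rw [le_div_iff₀ hrpos]; nlinarith
    have h2 : (n:ℝ) * (1 - 1/(r:ℝ)) = (n:ℝ) - (n:ℝ)/(r:ℝ) := by
      field_simp
      try ring
    linarith
  have hMlow : (n:ℝ) * ((e:ℝ) - 1) * ((r:ℝ) - 1)^2 / (2 * (r:ℝ)) ≤ (q * Stmt18.dcost r t : ℝ) := by
    push_cast
    rw [hdc, hchoose]
    have hBt : (B:ℝ) = (r:ℝ) ^ t := hBR
    have hsplit : (q:ℝ) * (((e:ℝ) - 1) * ((r:ℝ) * ((r:ℝ) - 1) / 2) * (r:ℝ) ^ (e - 2))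
        = ((e:ℝ) - 1) * (((r:ℝ) - 1) / 2) * ((q:ℝ) * (B:ℝ)) := by
      rw [hBt, ht]
      have : (r:ℝ) ^ (e - 1) = (r:ℝ) * (r:ℝ) ^ (e - 2) := by
        have he12 : e - 1 = (e - 2) + 1 := by omega
        rw [he12, pow_succ']
      rw [this]
      ring
    rw [hsplit]
    have hcoef : (0:ℝ) ≤ ((e:ℝ) - 1) * (((r:ℝ) - 1) / 2) := by nlinarith
    have h2 : (n:ℝ) * (1 - 1/(r:ℝ)) = (n:ℝ) * ((r:ℝ) - 1) / (r:ℝ) := by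
      field_simp
      try ring
    have h3 := mul_le_mul_of_nonneg_left hqBe hcoef
    have h4 : ((e:ℝ) - 1) * (((r:ℝ) - 1) / 2) * ((n:ℝ) * (1 - 1/(r:ℝ)))
        = (n:ℝ) * ((e:ℝ) - 1) * ((r:ℝ) - 1)^2 / (2 * (r:ℝ)) := by
      field_simp
      try ring
    linarith
  -- final chain
  have hstep1 : (1 - ε) * (n:ℝ) * (r:ℝ) * L / 2 ≤ (1 - ε') * (n:ℝ) * (r:ℝ) * L / 2 := by
    have hnrL : (0:ℝ) ≤ (n:ℝ) * (r:ℝ) * L := by positivity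
    have h2 := mul_le_mul_of_nonneg_right (show (1:ℝ) - ε ≤ 1 - ε' by linarith) hnrL
    calc (1 - ε) * (n:ℝ) * (r:ℝ) * L / 2 = ((1 - ε) * ((n:ℝ) * (r:ℝ) * L)) / 2 := by ring
      _ ≤ ((1 - ε') * ((n:ℝ) * (r:ℝ) * L)) / 2 := by linarith
      _ = (1 - ε') * (n:ℝ) * (r:ℝ) * L / 2 := by ring
  have hstep2 : (1 - ε') * (n:ℝ) * (r:ℝ) * L / 2 ≤ (1 - ε') * (n:ℝ) * (r:ℝ) * ((e:ℝ) + 1) / 2 := by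
    have h0 : (0:ℝ) ≤ 1 - ε' := by linarith
    have h1 : (0:ℝ) ≤ (1 - ε') * (n:ℝ) * (r:ℝ) :=
      mul_nonneg (mul_nonneg h0 hnposR.le) hrpos.le
    have h2 := mul_le_mul_of_nonneg_left hLe h1
    calc (1 - ε') * (n:ℝ) * (r:ℝ) * L / 2 = ((1 - ε') * (n:ℝ) * (r:ℝ)) * L / 2 := by ring
      _ ≤ ((1 - ε') * (n:ℝ) * (r:ℝ)) * ((e:ℝ) + 1) / 2 := by linarith
      _ = (1 - ε') * (n:ℝ) * (r:ℝ) * ((e:ℝ) + 1) / 2 := by ring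
  have hstep3 : (1 - ε') * (n:ℝ) * (r:ℝ) * ((e:ℝ) + 1) / 2
      ≤ (n:ℝ) * ((e:ℝ) - 1) * ((r:ℝ) - 1)^2 / (2 * (r:ℝ)) := by
    have h1 := mul_le_mul_of_nonneg_left hkey (show (0:ℝ) ≤ (n:ℝ)/(2*(r:ℝ)) by positivity)
    have h2 : (n:ℝ)/(2*(r:ℝ)) * ((1 - ε') * ((r:ℝ)^2 * ((e:ℝ) + 1)))
        = (1 - ε') * (n:ℝ) * (r:ℝ) * ((e:ℝ) + 1) / 2 := by
      field_simp
      try ring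
    have h3 : (n:ℝ)/(2*(r:ℝ)) * (((e:ℝ) - 1) * ((r:ℝ) - 1)^2)
        = (n:ℝ) * ((e:ℝ) - 1) * ((r:ℝ) - 1)^2 / (2 * (r:ℝ)) := by
      field_simp
      try ring
    linarith
  linarith [hM, hMlow, hstep1, hstep2, hstep3]
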